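/- For every integer c ≥ 1 and all constants ε, ε' with 0 < ε' < ε < 1, there exist constants α > 0, γ₀ ≥ 1 and s₀ (depending only on c, ε and ε') such that the following holds. Let Σ be a finite alphabet with |Σ| ≥ s₀, and let m be a power of two with 2 ≤ m ≤ |Σ|^{1−ε}. Let h : Σ^c → [m] be a random simple tabulation hash function. Suppose C : (0,∞) → (0,∞) is a function such that for all γ with 0 < γ ≤ |Σ|^{ε'/c}, all sets S ⊆ Σ^c, all weights w_x ∈ [0,1] for x ∈ S, every y ∈ [m], and every t > 0, the random variable X = Σ_{x∈S} w_x·1[h(x) = y], with μ = E[X] and σ² = Var[X] > 0, satisfies Pr[|X − μ| ≥ t] ≤ 2·exp(−σ²·𝒞(t/σ²)/C(γ)) + m^{−γ}. Then for every γ with γ₀ ≤ γ ≤ |Σ|^{ε'/c}, one has C(γ) ≥ α·γ^{c−2}. -/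

import Mathlib

open Finset Real
open scoped BigOperators Classical

noncomputable section

/-- The Bennett function `𝒞(x) = (x+1)·ln(x+1) − x`. -/
def bennett (x : ℝ) : ℝ := (x + 1) * Real.log (x + 1) - x

/-- Expectation with respect to the uniform distribution on a finite type. -/
def unifExp {Ω : Type*} [Fintype Ω] (f : Ω → ℝ) : ℝ := (∑ ω, f ω) / (Fintype.card Ω : ℝ)

/-- Variance with respect to the uniform distribution on a finite type. -/
def unifVar {Ω : Type*} [Fintype Ω] (f : Ω → ℝ) : ℝ := unifExp (fun ω => (f ω - unifExp f) ^ 2)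

/-- Probability of an event with respect to the uniform distribution on a finite type. -/
def unifPr {Ω : Type*} [Fintype Ω] (p : Ω → Prop) : ℝ :=
  ((Finset.univ.filter (fun ω => p ω)).card : ℝ) / (Fintype.card Ω : ℝ)

/-- `k`-bit strings, with bitwise XOR given by addition in `(ZMod 2)^k`. -/
abbrev Word (k : ℕ) : Type := Fin k → ZMod 2

/-- Simple tabulation hashing: given a table `T` on position characters, the hash value of a
key `x` is the XOR of the table entries of its position characters. -/
def simpleTab {Sig : Type*} {c k : ℕ} (T : Fin c × Sig → Word k) (x : Fin c → Sig) : Word k :=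
  ∑ i : Fin c, T (i, x i)

set_option linter.unusedSectionVars false

section Helpers
lemma fiber_card {A G : Type*} [Fintype A] [AddCommGroup A] [Fintype G] [DecidableEq G]
    [AddCommGroup G] (F : A → G) (g : G → A)
    (hgadd : ∀ v w : G, g v + g w = g (v + w))
    (hg : ∀ (T : A) (v : G), F (T + g v) = F T + v) (y : G) :
    (Finset.univ.filter (fun T => F T = y)).card * Fintype.card G = Fintype.card A := by
  have g0 : g 0 = 0 := by
    have h := hgadd 0 0
    rw [add_zero] at h
    exact add_eq_left.mp h
  have key : ∀ y' : G, (univ.filter (fun T => F T = y')).card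
      = (univ.filter (fun T => F T = y)).card := by
    intro y'
    apply Finset.card_bij (fun T _ => T + g (y - y'))
    · intro T hT
      simp only [mem_filter, mem_univ, true_and] at hT ⊢
      rw [hg, hT]; abel
    · intro T₁ h₁ T₂ h₂ h
      exact add_right_cancel h
    · intro U hU
      simp only [mem_filter, mem_univ, true_and] at hU
      refine ⟨U + g (y' - y), ?_, ?_⟩
      · simp only [mem_filter, mem_univ, true_and]
        rw [hg, hU]; abel
      · rw [add_assoc, hgadd]
        norm_num [g0]
  have h2 : (univ : Finset A).card = ∑ y' : G, (univ.filter (fun T => F T = y')).card :=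
    Finset.card_eq_sum_card_fiberwise (fun T _ => mem_univ (F T))
  rw [← Finset.card_univ (α := A), h2]
  simp only [key]
  rw [Finset.sum_const, Finset.card_univ, smul_eq_mul, mul_comm]
open Finset Real
open scoped BigOperators Classical


variable {Sig : Type*} [Fintype Sig] [DecidableEq Sig] {c k : ℕ}

lemma simpleTab_add (T U : Fin c × Sig → Word k) (x : Fin c → Sig) :
    simpleTab (T + U) x = simpleTab T x + simpleTab U x := by
  simp [simpleTab, Finset.sum_add_distrib]

lemma simpleTab_ind (x : Fin c → Sig) (i₀ : Fin c) (a : Sig) (v : Word k) :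
    simpleTab (fun r => if r = (i₀, a) then v else 0) x
      = if x i₀ = a then v else 0 := by
  unfold simpleTab
  rw [Finset.sum_eq_single i₀]
  · simp [Prod.ext_iff]
  · intro i _ hi
    simp [Prod.ext_iff, hi]
  · simp

set_option linter.unusedSectionVars false

lemma card_word : Fintype.card (Word k) = 2 ^ k := by
  simp [Word]

/-- Fiber of a single key. -/
lemma single_fiber (hc : 0 < c) (x : Fin c → Sig) (y : Word k) :
    (Finset.univ.filter (fun T : Fin c × Sig → Word k => simpleTab T x = y)).card * 2 ^ k
      = Fintype.card (Fin c × Sig → Word k) := by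
  classical
  set i₀ : Fin c := ⟨0, hc⟩
  have := fiber_card (fun T : Fin c × Sig → Word k => simpleTab T x)
    (fun v => fun r => if r = (i₀, x i₀) then v else 0)
    (by
      intro v w; funext r; by_cases h : r = (i₀, x i₀) <;> simp [h])
    (by
      intro T v
      show simpleTab _ x = simpleTab T x + v
      rw [simpleTab_add, simpleTab_ind]
      simp) y
  rwa [card_word] at this

/-- Joint fiber of two distinct keys. -/
lemma pair_fiber (x₁ x₂ : Fin c → Sig) (i₀ : Fin c) (hne : x₁ i₀ ≠ x₂ i₀)
    (y₁ y₂ : Word k) :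
    (Finset.univ.filter (fun T : Fin c × Sig → Word k =>
        simpleTab T x₁ = y₁ ∧ simpleTab T x₂ = y₂)).card * (2 ^ k * 2 ^ k)
      = Fintype.card (Fin c × Sig → Word k) := by
  classical
  have := fiber_card (fun T : Fin c × Sig → Word k => (simpleTab T x₁, simpleTab T x₂))
    (fun vw => (fun r => if r = (i₀, x₁ i₀) then vw.1 else 0)
             + (fun r => if r = (i₀, x₂ i₀) then vw.2 else 0))
    (by
      intro v w; funext r
      by_cases h1 : r = (i₀, x₁ i₀) <;> by_cases h2 : r = (i₀, x₂ i₀) <;>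
        simp [h1, h2, hne, Ne.symm hne, Pi.add_apply] <;> abel)
    (by
      intro T vw
      have e1 : simpleTab (T + ((fun r => if r = (i₀, x₁ i₀) then vw.1 else 0)
             + (fun r => if r = (i₀, x₂ i₀) then vw.2 else 0))) x₁
          = simpleTab T x₁ + vw.1 := by
        rw [simpleTab_add, simpleTab_add, simpleTab_ind, simpleTab_ind]
        simp [hne]
      have e2 : simpleTab (T + ((fun r => if r = (i₀, x₁ i₀) then vw.1 else 0)
             + (fun r => if r = (i₀, x₂ i₀) then vw.2 else 0))) x₂
          = simpleTab T x₂ + vw.2 := by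
        rw [simpleTab_add, simpleTab_add, simpleTab_ind, simpleTab_ind]
        simp [Ne.symm hne]
      show (simpleTab _ x₁, simpleTab _ x₂) = _
      rw [Prod.ext_iff]
      exact ⟨by rw [e1]; rfl, by rw [e2]; rfl⟩) (y₁, y₂)
  rw [Fintype.card_prod, card_word] at this
  rw [show (Finset.univ.filter (fun T : Fin c × Sig → Word k =>
        simpleTab T x₁ = y₁ ∧ simpleTab T x₂ = y₂))
      = (Finset.univ.filter (fun T : Fin c × Sig → Word k =>
        (simpleTab T x₁, simpleTab T x₂) = (y₁, y₂))) from
    Finset.filter_congr (fun T _ => by simp [Prod.ext_iff])]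
  exact this

/-- Fiber of the restriction map to a set `P` of table positions. -/
lemma restrict_fiber (P : Finset (Fin c × Sig)) :
    (Finset.univ.filter (fun T : Fin c × Sig → Word k => ∀ p ∈ P, T p = 0)).card
        * (2 ^ k) ^ P.card
      = Fintype.card (Fin c × Sig → Word k) := by
  classical
  have := fiber_card (fun T : Fin c × Sig → Word k => fun p : ↥P => T ↑p)
    (fun v => fun r => if h : r ∈ P then v ⟨r, h⟩ else 0)
    (by
      intro v w; funext r
      by_cases h : r ∈ P <;> simp [h])
    (by
      intro T v; funext p
      simp [Pi.add_apply, p.2])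
    0
  have hcard : Fintype.card (↥P → Word k) = (2 ^ k) ^ P.card := by
    rw [Fintype.card_fun, card_word, Fintype.card_coe]
  rw [hcard] at this
  rw [show (Finset.univ.filter (fun T : Fin c × Sig → Word k => ∀ p ∈ P, T p = 0))
      = (Finset.univ.filter (fun T : Fin c × Sig → Word k =>
          (fun p : ↥P => T ↑p) = 0)) from
    Finset.filter_congr (fun T _ => by
      constructor
      · intro h; funext p; exact h p p.2
      · intro h p hp; exact congrFun h ⟨p, hp⟩)]
  exact this


lemma unifVar_eq {Ω : Type*} [Fintype Ω] [Nonempty Ω] (f : Ω → ℝ) :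
    unifVar f = unifExp (fun ω => f ω ^ 2) - unifExp f ^ 2 := by
  have hN : (0:ℝ) < Fintype.card Ω := by
    exact_mod_cast Fintype.card_pos
  set E := unifExp f with hE
  have hsum : ∑ ω, f ω = (Fintype.card Ω : ℝ) * E := by
    rw [hE]; unfold unifExp; field_simp
  have key : ∑ ω, (f ω - E) ^ 2 = (∑ ω, f ω ^ 2) - (Fintype.card Ω : ℝ) * E ^ 2 := by
    have : ∀ ω, (f ω - E) ^ 2 = f ω ^ 2 - 2 * E * f ω + E ^ 2 := fun ω => by ring
    rw [Finset.sum_congr rfl (fun ω _ => this ω)]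
    rw [Finset.sum_add_distrib, Finset.sum_sub_distrib, ← Finset.mul_sum, hsum,
      Finset.sum_const, Finset.card_univ, nsmul_eq_mul]
    ring
  unfold unifVar
  show (∑ ω, (f ω - E) ^ 2) / (Fintype.card Ω : ℝ) = _
  rw [key]
  unfold unifExp
  field_simp

lemma card_omega_pos : 0 < (Fintype.card (Fin c × Sig → Word k) : ℝ) := by
  exact_mod_cast Fintype.card_pos

lemma exp_X (hc : 0 < c) (S : Finset (Fin c → Sig)) (y : Word k) :
    unifExp (fun T : Fin c × Sig → Word k =>
        ∑ x ∈ S, (if simpleTab T x = y then (1:ℝ) else 0))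
      = S.card / 2 ^ k := by
  classical
  set N : ℝ := (Fintype.card (Fin c × Sig → Word k) : ℝ) with hN
  have hNpos : 0 < N := card_omega_pos
  have h2k : (0:ℝ) < 2 ^ k := by positivity
  unfold unifExp
  rw [Finset.sum_comm]
  have hfiber : ∀ x ∈ S, (∑ T : Fin c × Sig → Word k,
      (if simpleTab T x = y then (1:ℝ) else 0)) = N / 2 ^ k := by
    intro x _
    rw [Finset.sum_boole]
    have h1 := single_fiber (Sig := Sig) (k := k) hc x y
    have h2 : ((Finset.univ.filter (fun T : Fin c × Sig → Word k =>
        simpleTab T x = y)).card : ℝ) * 2 ^ k = N := by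
      rw [hN]; exact_mod_cast congrArg (Nat.cast (R := ℝ)) h1
    rw [eq_div_iff (ne_of_gt h2k)]
    exact h2
  rw [Finset.sum_congr rfl hfiber, Finset.sum_const, nsmul_eq_mul]
  clear_value N
  rw [← hN]
  field_simp

lemma exp_X2 (hc : 0 < c) (S : Finset (Fin c → Sig)) (y : Word k) :
    unifExp (fun T : Fin c × Sig → Word k =>
        (∑ x ∈ S, (if simpleTab T x = y then (1:ℝ) else 0)) ^ 2)
      = S.card / 2 ^ k + S.card * (S.card - 1) / (2 ^ k) ^ 2 := by
  classical
  set N : ℝ := (Fintype.card (Fin c × Sig → Word k) : ℝ) with hN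
  have hNpos : 0 < N := card_omega_pos
  have h2k : (0:ℝ) < 2 ^ k := by positivity
  unfold unifExp
  -- expand the square as a double sum and swap
  have hsq : ∀ T : Fin c × Sig → Word k,
      (∑ x ∈ S, (if simpleTab T x = y then (1:ℝ) else 0)) ^ 2
      = ∑ x ∈ S, ∑ x' ∈ S, (if simpleTab T x = y ∧ simpleTab T x' = y then (1:ℝ) else 0) := by
    intro T
    rw [sq, Finset.sum_mul_sum]
    refine Finset.sum_congr rfl fun x _ => Finset.sum_congr rfl fun x' _ => ?_
    by_cases h1 : simpleTab T x = y <;> by_cases h2 : simpleTab T x' = y <;>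
      simp [h1, h2]
  rw [Finset.sum_congr rfl (fun T _ => hsq T), Finset.sum_comm]
  have hswap : ∀ x ∈ S, (∑ T : Fin c × Sig → Word k, ∑ x' ∈ S,
        (if simpleTab T x = y ∧ simpleTab T x' = y then (1:ℝ) else 0))
      = N / 2 ^ k + (S.card - 1) * (N / (2 ^ k) ^ 2) := by
    intro x hx
    rw [Finset.sum_comm]
    have hterm : ∀ x' ∈ S, (∑ T : Fin c × Sig → Word k,
        (if simpleTab T x = y ∧ simpleTab T x' = y then (1:ℝ) else 0))
        = if x' = x then N / 2 ^ k else N / (2 ^ k) ^ 2 := by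
      intro x' _
      rw [Finset.sum_boole]
      by_cases hxx : x' = x
      · subst hxx
        rw [if_pos rfl, eq_div_iff (ne_of_gt h2k), hN]
        have h1 := single_fiber (Sig := Sig) (k := k) hc x' y
        rw [show (Finset.univ.filter (fun T : Fin c × Sig → Word k =>
              simpleTab T x' = y ∧ simpleTab T x' = y))
            = (Finset.univ.filter (fun T : Fin c × Sig → Word k => simpleTab T x' = y)) from
          Finset.filter_congr (fun T _ => by simp)]
        exact_mod_cast congrArg (Nat.cast (R := ℝ)) h1
      · obtain ⟨i₀, hi₀⟩ := Function.ne_iff.mp hxx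
        rw [if_neg hxx, eq_div_iff (by positivity), hN]
        have h1 := pair_fiber (Sig := Sig) (k := k) x x' i₀ (Ne.symm hi₀) y y
        have := congrArg (Nat.cast (R := ℝ)) h1
        push_cast at this
        rw [← this]; ring
    rw [Finset.sum_congr rfl hterm]
    have hsplit : ∀ x' ∈ S, (if x' = x then N / 2 ^ k else N / (2 ^ k) ^ 2)
        = N / (2 ^ k) ^ 2 + (if x' = x then N / 2 ^ k - N / (2 ^ k) ^ 2 else 0) := by
      intro x' _; by_cases h : x' = x <;> simp [h]
    rw [Finset.sum_congr rfl hsplit, Finset.sum_add_distrib, Finset.sum_const,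
      Finset.sum_ite_eq' S x, if_pos hx, nsmul_eq_mul]
    ring
  rw [Finset.sum_congr rfl hswap, Finset.sum_const, nsmul_eq_mul]
  clear_value N
  rw [← hN]
  field_simp


lemma log_three_gt_one : 1 < Real.log 3 := by
  rw [show (1:ℝ) = Real.log (Real.exp 1) by rw [Real.log_exp]]
  apply Real.log_lt_log (Real.exp_pos 1)
  calc Real.exp 1 < 2.7182818286 := Real.exp_one_lt_d9
    _ < 3 := by norm_num

lemma log_three_le : Real.log 3 ≤ 3/2 := by
  rw [Real.log_le_iff_le_exp (by norm_num)]
  have h : (7/4 : ℝ) ≤ Real.exp (3/4) := by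
    have := Real.add_one_le_exp (3/4 : ℝ)
    linarith
  have h2 : Real.exp (3/2 : ℝ) = Real.exp (3/4) * Real.exp (3/4) := by
    rw [← Real.exp_add]; norm_num
  nlinarith [Real.exp_pos (3/4 : ℝ)]

lemma bennett_key (m : ℝ) (hm : 2 ≤ m) :
    (Real.log 3 - 1) / 6 * (m ^ 2 * Real.log m) ≤ (m - 1) * bennett m := by
  have hk1 : 1 < Real.log 3 := log_three_gt_one
  have hk2 : Real.log 3 ≤ 3/2 := log_three_le
  have hlogm : Real.log m ≤ Real.log (m + 1) := by
    apply Real.log_le_log (by linarith) (by linarith)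
  have hlogm0 : 0 < Real.log m := Real.log_pos (by linarith)
  unfold bennett
  rcases le_or_gt m 8 with h8 | h8
  · -- small m : bennett m ≥ m (log 3 - 1)
    have h3 : Real.log 3 ≤ Real.log (m + 1) := by
      apply Real.log_le_log (by norm_num) (by linarith)
    have hb : m * (Real.log 3 - 1) ≤ (m + 1) * Real.log (m + 1) - m := by
      nlinarith [Real.log_nonneg (show (1:ℝ) ≤ m + 1 by linarith)]
    -- log m ≤ log 8 ≤ 2.08
    have hl8 : Real.log m ≤ Real.log 8 := Real.log_le_log (by linarith) h8
    have hl2 : Real.log 8 = 3 * Real.log 2 := by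
      rw [show (8:ℝ) = 2 ^ 3 by norm_num, Real.log_pow]; push_cast; ring
    have hlog2 : Real.log 2 < 0.6931471808 := Real.log_two_lt_d9
    have hlm : Real.log m ≤ 2.1 := by
      rw [hl2] at hl8; linarith
    have hK : 0 < Real.log 3 - 1 := by linarith
    have s1 : (Real.log 3 - 1) / 6 * (m ^ 2 * Real.log m)
        ≤ (Real.log 3 - 1) / 6 * (m ^ 2 * 2.1) := by
      apply mul_le_mul_of_nonneg_left _ (by linarith)
      exact mul_le_mul_of_nonneg_left hlm (sq_nonneg m)
    have s2 : (Real.log 3 - 1) / 6 * (m ^ 2 * 2.1) ≤ (m - 1) * (m * (Real.log 3 - 1)) := by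
      nlinarith [mul_nonneg (le_of_lt hK) (show (0:ℝ) ≤ m * (0.65 * m - 1) by nlinarith)]
    have s4 : (m - 1) * (m * (Real.log 3 - 1))
        ≤ (m - 1) * ((m + 1) * Real.log (m + 1) - m) :=
      mul_le_mul_of_nonneg_left hb (by linarith)
    linarith
  · -- large m : bennett m ≥ (m+1) log m - m
    have hb : (m + 1) * Real.log m - m ≤ (m + 1) * Real.log (m + 1) - m := by
      nlinarith
    have hl8 : Real.log 8 ≤ Real.log m := Real.log_le_log (by norm_num) (le_of_lt h8)
    have hl2 : Real.log 8 = 3 * Real.log 2 := by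
      rw [show (8:ℝ) = 2 ^ 3 by norm_num, Real.log_pow]; push_cast; ring
    have hlog2 : 0.6931471803 < Real.log 2 := Real.log_two_gt_d9
    have hlm : 2 ≤ Real.log m := by rw [hl2] at hl8; linarith
    have hκ : (Real.log 3 - 1) / 6 ≤ 1 / 12 := by linarith
    nlinarith [mul_le_mul_of_nonneg_left hlm (show (0:ℝ) ≤ 11/12 * m^2 - 1 by nlinarith),
      mul_pos (show (0:ℝ) < m - 1 by linarith) hlogm0]

lemma div_div_aux (A m : ℝ) (hA : A ≠ 0) (hm : m ≠ 0) : (A / m) / (A / m ^ 2) = m := by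
  field_simp

lemma aux2 (N m x L : ℝ) (hm : m ≠ 0) : N / m ^ 2 * (x * (m ^ 2 * L)) = x * N * L := by
  field_simp

lemma aux3a (q : ℝ) (hq : q ≠ 0) : 1 / (2 * q) = 1 / q / 2 := by field_simp
lemma aux3b (q : ℝ) (hq : q ≠ 0) : 1 / (4 * q) = 1 / q / 4 := by field_simp

lemma aux4 (x C D E : ℝ) (hC : C ≠ 0) (hD : D ≠ 0) :
    x / (3 * C * D) * (D * E) = x * E / (3 * C) := by
  field_simp

lemma log_one_div_aux (q m : ℝ) (hm : 0 < m) (n : ℕ) (hq : q = m ^ n) :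
    Real.log (1 / (4 * q)) = -(Real.log 4 + n * Real.log m) := by
  subst hq
  rw [one_div, Real.log_inv, Real.log_mul (by norm_num) (by positivity), Real.log_pow]

end Helpers

set_option maxHeartbeats 1000000 in
/-- Tightness of the simple tabulation concentration bound for few bins:
any function `C(γ)` such that the Chernoff bound with delay `C(γ)` and additive error
`m^{−γ}` holds for simple tabulation must satisfy `C(γ) ≥ α·γ^{c−2}`. -/
theorem simple_tabulation_lower_bound
    (c : ℕ) (hc : 1 ≤ c) (ε ε' : ℝ) (hε'0 : 0 < ε') (hε'ε : ε' < ε) (hε1 : ε < 1) :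
    ∃ α γ₀ s₀ : ℝ, 0 < α ∧ 1 ≤ γ₀ ∧
      ∀ (Sig : Type) (_ : Fintype Sig) (_ : DecidableEq Sig),
        s₀ ≤ (Fintype.card Sig : ℝ) →
      ∀ k : ℕ, 1 ≤ k → ((2 : ℝ) ^ k) ≤ (Fintype.card Sig : ℝ) ^ (1 - ε) →
      ∀ Cf : ℝ → ℝ, (∀ γ : ℝ, 0 < γ → 0 < Cf γ) →
      (∀ γ : ℝ, 0 < γ → γ ≤ (Fintype.card Sig : ℝ) ^ (ε' / (c : ℝ)) →
        ∀ (S : Finset (Fin c → Sig)) (w : (Fin c → Sig) → ℝ),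
          (∀ x ∈ S, 0 ≤ w x ∧ w x ≤ 1) →
          ∀ (y : Word k) (X : (Fin c × Sig → Word k) → ℝ),
          (∀ T, X T = ∑ x ∈ S, w x * (if simpleTab T x = y then (1 : ℝ) else 0)) →
          ∀ μ σ2 : ℝ, μ = unifExp X → σ2 = unifVar X → 0 < σ2 →
          ∀ t : ℝ, 0 < t →
            unifPr (fun T => t ≤ |X T - μ|) ≤
              2 * Real.exp (-(σ2 * bennett (t / σ2)) / Cf γ) + ((2 : ℝ) ^ k) ^ (-γ)) →
      ∀ γ : ℝ, γ₀ ≤ γ → γ ≤ (Fintype.card Sig : ℝ) ^ (ε' / (c : ℝ)) →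
        α * γ ^ ((c : ℝ) - 2) ≤ Cf γ := by
  have hκ : 0 < (Real.log 3 - 1) / 6 := by have := log_three_gt_one; linarith
  set κ : ℝ := (Real.log 3 - 1) / 6 with hκdef
  have hcR : (1:ℝ) ≤ (c:ℝ) := by exact_mod_cast hc
  have hcpos : (0:ℝ) < (c:ℝ) := by linarith
  refine ⟨κ / (3 * c * (2 * c) ^ (c - 1)), 2 * c + 2, 2, ?_, ?_, ?_⟩
  · have : (0:ℝ) < (2 * (c:ℝ)) ^ (c - 1) := by positivity
    positivity
  · nlinarith
  intro Sig instF instD hs₀ k hk _hms Cf hCfpos hCf γ hγ₀ hγub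
  -- basic facts
  have hn2 : (2:ℝ) ≤ (Fintype.card Sig : ℝ) := hs₀
  have hγ2c : 2 * (c:ℝ) + 2 ≤ γ := by exact_mod_cast hγ₀
  have hγ2 : (2:ℝ) ≤ γ := by linarith
  have hγ1 : (1:ℝ) ≤ γ := by linarith
  have hγpos : (0:ℝ) < γ := by linarith
  -- the alphabet-subset size b
  set b : ℕ := Nat.ceil (γ / (2*c)) with hbdef
  have hpos : 0 < γ / (2*(c:ℝ)) := by positivity
  have hbup : (b : ℝ) < γ / (2*c) + 1 := Nat.ceil_lt_add_one (le_of_lt hpos)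
  have hblow : γ / (2*(c:ℝ)) ≤ (b : ℝ) := Nat.le_ceil _
  have hb1 : 1 ≤ b := by rw [hbdef, Nat.one_le_ceil_iff]; exact hpos
  have hb1R : (1:ℝ) ≤ (b:ℝ) := by exact_mod_cast hb1
  have hcb : (c:ℝ) * (b:ℝ) + 1 ≤ γ := by
    have h1 : (c:ℝ) * (b : ℝ) < c * (γ / (2*c) + 1) :=
      mul_lt_mul_of_pos_left hbup hcpos
    have h2 : (c:ℝ) * (γ / (2*c) + 1) = γ / 2 + c := by field_simp
    nlinarith
  have hbγ : (b:ℝ) ≤ γ := by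
    have h2 : γ / (2*(c:ℝ)) + 1 ≤ γ := by
      rw [div_add' _ _ _ (by positivity), div_le_iff₀ (by positivity)]
      nlinarith
    linarith
  have hγ2cb : γ ≤ 2 * (c:ℝ) * (b:ℝ) := by
    rw [div_le_iff₀ (by positivity)] at hblow; linarith
  have hbn : b ≤ Fintype.card Sig := by
    have h1 : ((Fintype.card Sig : ℝ)) ^ (ε' / (c:ℝ)) ≤ (Fintype.card Sig : ℝ) := by
      have := Real.rpow_le_rpow_of_exponent_le (by linarith : (1:ℝ) ≤ (Fintype.card Sig : ℝ))
        (show ε' / (c:ℝ) ≤ 1 by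
          rw [div_le_one hcpos]; linarith)
      rwa [Real.rpow_one] at this
    have : (b:ℝ) ≤ (Fintype.card Sig : ℝ) := le_trans hbγ (le_trans hγub h1)
    exact_mod_cast this
  -- choose the subset B and key set S
  obtain ⟨B, _hBsub, hBcard⟩ := Finset.exists_subset_card_eq (s := (Finset.univ : Finset Sig)) (n := b)
    (by rwa [Finset.card_univ])
  set S : Finset (Fin c → Sig) := Fintype.piFinset (fun _ : Fin c => B) with hSdef
  have hScard : S.card = b ^ c := by
    rw [hSdef, Fintype.card_piFinset]
    simp [hBcard]
  -- the random variable
  set m : ℝ := (2:ℝ) ^ k with hmdef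
  have hm2 : (2:ℝ) ≤ m := by
    rw [hmdef]
    calc (2:ℝ) = 2 ^ 1 := (pow_one 2).symm
    _ ≤ 2 ^ k := pow_le_pow_right₀ (by norm_num) hk
  have hm0 : (0:ℝ) < m := by linarith
  set Ns : ℝ := ((b:ℝ)) ^ c with hNsdef
  have hNs1 : (1:ℝ) ≤ Ns := one_le_pow₀ hb1R
  have hNspos : (0:ℝ) < Ns := by linarith
  set X : (Fin c × Sig → Word k) → ℝ :=
    fun T => ∑ x ∈ S, (fun _ : Fin c → Sig => (1:ℝ)) x
      * (if simpleTab T x = (0 : Word k) then (1:ℝ) else 0) with hXdef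
  have hXeq : ∀ T, X T = ∑ x ∈ S, (if simpleTab T x = (0 : Word k) then (1:ℝ) else 0) := by
    intro T; rw [hXdef]; simp
  have hXfun : X = fun T => ∑ x ∈ S, (if simpleTab T x = (0 : Word k) then (1:ℝ) else 0) :=
    funext hXeq
  have hcpos' : 0 < c := hc
  -- expectation and variance
  have hμ : unifExp X = Ns / m := by
    rw [hXfun, exp_X hcpos' S 0, hScard, hNsdef, hmdef]; push_cast; ring
  have hvar : unifVar X = Ns * (m - 1) / m ^ 2 := by
    rw [unifVar_eq, hXfun, exp_X hcpos' S 0]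
    have h2 : unifExp (fun T => (∑ x ∈ S, (if simpleTab T x = (0 : Word k) then (1:ℝ) else 0)) ^ 2)
        = (S.card : ℝ) / 2 ^ k + S.card * (S.card - 1) / (2 ^ k) ^ 2 := exp_X2 hcpos' S 0
    rw [h2, hScard, hNsdef, hmdef]
    push_cast
    field_simp
    ring
  have hσ2pos : 0 < unifVar X := by
    rw [hvar]
    exact div_pos (mul_pos hNspos (by linarith)) (by positivity)
  -- deviation parameter
  set μ : ℝ := unifExp X with hμdef
  set t : ℝ := Ns - μ with htdef
  have hμval : μ = Ns / m := hμ
  have htval : t = Ns * (m - 1) / m := by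
    rw [htdef, hμval]; field_simp
  have htpos : 0 < t := by
    rw [htval]
    exact div_pos (mul_pos hNspos (by linarith)) (by positivity)
  have htσ : t / unifVar X = m := by
    rw [htval, hvar]
    exact div_div_aux _ _ (by nlinarith) (by linarith)
  -- apply the concentration hypothesis
  have hconc := hCf γ hγpos hγub S (fun _ => (1:ℝ)) (fun x _ => by norm_num) 0 X
    (fun T => by rw [hXdef]) μ (unifVar X) hμdef rfl hσ2pos t htpos
  rw [htσ] at hconc
  -- lower bound for the deviation probability via the all-zero event
  set P : Finset (Fin c × Sig) := (Finset.univ : Finset (Fin c)) ×ˢ B with hPdef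
  have hPcard : P.card = c * b := by
    rw [hPdef, Finset.card_product, Finset.card_univ, Fintype.card_fin, hBcard]
  have hEX : ∀ T : Fin c × Sig → Word k, (∀ p ∈ P, T p = 0) → X T = Ns := by
    intro T hT
    rw [hXeq]
    have : ∀ x ∈ S, (if simpleTab T x = (0 : Word k) then (1:ℝ) else 0) = 1 := by
      intro x hx
      rw [if_pos]
      unfold simpleTab
      apply Finset.sum_eq_zero
      intro i _
      apply hT
      rw [hPdef, Finset.mem_product]
      exact ⟨Finset.mem_univ i, (Fintype.mem_piFinset.mp (by rwa [← hSdef])) i⟩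
    rw [Finset.sum_congr rfl this, Finset.sum_const, hScard, nsmul_eq_mul, mul_one,
      hNsdef]
    push_cast; ring
  have hμleNs : μ ≤ Ns := by
    rw [hμval]
    rw [div_le_iff₀ hm0]
    nlinarith
  have hPrLow : 1 / m ^ (c * b) ≤ unifPr (fun T : Fin c × Sig → Word k => t ≤ |X T - μ|) := by
    have hsub : (Finset.univ.filter (fun T : Fin c × Sig → Word k => ∀ p ∈ P, T p = 0))
        ⊆ (Finset.univ.filter (fun T : Fin c × Sig → Word k => t ≤ |X T - μ|)) := by
      intro T hT
      rw [Finset.mem_filter] at hT ⊢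
      refine ⟨Finset.mem_univ T, ?_⟩
      rw [hEX T hT.2, show |Ns - μ| = Ns - μ from abs_of_nonneg (by linarith)]
    have hfib := restrict_fiber (Sig := Sig) (c := c) (k := k) P
    rw [hPcard] at hfib
    have hfibR : ((Finset.univ.filter
        (fun T : Fin c × Sig → Word k => ∀ p ∈ P, T p = 0)).card : ℝ) * m ^ (c * b)
        = (Fintype.card (Fin c × Sig → Word k) : ℝ) := by
      rw [hmdef]
      exact_mod_cast congrArg (Nat.cast (R := ℝ)) hfib
    have hNΩ : (0:ℝ) < (Fintype.card (Fin c × Sig → Word k) : ℝ) := by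
      exact_mod_cast Fintype.card_pos
    unfold unifPr
    rw [div_le_div_iff₀ (by positivity) hNΩ]
    calc 1 * (Fintype.card (Fin c × Sig → Word k) : ℝ)
        = ((Finset.univ.filter
            (fun T : Fin c × Sig → Word k => ∀ p ∈ P, T p = 0)).card : ℝ) * m ^ (c * b) := by
          rw [hfibR]; ring
      _ ≤ ((Finset.univ.filter
            (fun T : Fin c × Sig → Word k => t ≤ |X T - μ|)).card : ℝ) * m ^ (c * b) := by
          apply mul_le_mul_of_nonneg_right _ (by positivity)
          exact_mod_cast Finset.card_le_card hsub
  -- the additive error is at most half the event probability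
  have hqpos : (0:ℝ) < m ^ (c * b) := by positivity
  have hq1 : (1:ℝ) ≤ m ^ (c * b) := one_le_pow₀ (by linarith)
  have hup2 : m ^ (-γ) ≤ 1 / m ^ (c * b) / 2 := by
    have step1 : m ^ (-γ) ≤ m ^ (-(((c*b : ℕ) : ℝ)) - 1) := by
      apply Real.rpow_le_rpow_of_exponent_le (by linarith)
      push_cast
      linarith
    have step2 : m ^ (-(((c*b : ℕ) : ℝ)) - 1) = (m ^ (c*b) * m)⁻¹ := by
      rw [show -(((c*b : ℕ) : ℝ)) - 1 = -(((c*b : ℕ) : ℝ) + 1) by ring,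
        Real.rpow_neg (le_of_lt hm0), Real.rpow_add hm0, Real.rpow_natCast, Real.rpow_one]
    have step3 : (m ^ (c*b) * m)⁻¹ ≤ (m ^ (c*b) * 2)⁻¹ := by
      apply inv_anti₀ (by positivity)
      exact mul_le_mul_of_nonneg_left hm2 (by positivity)
    have step4 : (m ^ (c*b) * 2)⁻¹ = 1 / m ^ (c*b) / 2 := by
      ring
    calc m ^ (-γ) ≤ _ := step1
      _ = _ := step2
      _ ≤ _ := step3
      _ = _ := step4
  -- extract the exponential lower bound
  have h4 : 1 / m ^ (c*b) / 4 ≤ Real.exp (-(unifVar X * bennett m) / Cf γ) := by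
    have h0 := le_trans hPrLow hconc
    have hoq : (0:ℝ) < 1 / m ^ (c * b) := by positivity
    linarith
  -- take logarithms
  have hlog4 : Real.log 4 ≤ 2 * Real.log m := by
    have : Real.log 4 = 2 * Real.log 2 := by
      rw [show (4:ℝ) = 2 ^ 2 by norm_num, Real.log_pow]; push_cast; ring
    rw [this]
    have := Real.log_le_log (by norm_num) hm2
    linarith
  have hlogm_pos : 0 < Real.log m := Real.log_pos (by linarith)
  have hlog := Real.log_le_log (by positivity) h4
  rw [Real.log_exp] at hlog
  rw [show (1 : ℝ) / m ^ (c*b) / 4 = 1 / (4 * m ^ (c*b)) by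
      rw [aux3b _ (ne_of_gt hqpos)],
    log_one_div_aux _ _ hm0 (c*b) rfl] at hlog
  have hCfγ : 0 < Cf γ := hCfpos γ hγpos
  have hKup : unifVar X * bennett m ≤ Cf γ * ((c*b + 2 : ℝ) * Real.log m) := by
    have h1 : -(Real.log 4 + (c*b : ℕ) * Real.log m) ≤ -(unifVar X * bennett m) / Cf γ := hlog
    rw [neg_div] at h1
    have h2 : unifVar X * bennett m / Cf γ ≤ Real.log 4 + (c*b : ℕ) * Real.log m := by
      linarith
    rw [div_le_iff₀ hCfγ] at h2
    calc unifVar X * bennett m ≤ (Real.log 4 + (c*b : ℕ) * Real.log m) * Cf γ := h2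
      _ ≤ ((c*b + 2 : ℝ) * Real.log m) * Cf γ := by
          apply mul_le_mul_of_nonneg_right _ (le_of_lt hCfγ)
          push_cast
          linarith
      _ = Cf γ * ((c*b + 2 : ℝ) * Real.log m) := by ring
  -- lower bound the Bennett exponent
  have hKlow : κ * Ns * Real.log m ≤ unifVar X * bennett m := by
    have h1 := mul_le_mul_of_nonneg_left (bennett_key m hm2)
      (show (0:ℝ) ≤ Ns / m ^ 2 by positivity)
    calc κ * Ns * Real.log m = Ns / m ^ 2 * (κ * (m ^ 2 * Real.log m)) :=
          (aux2 _ _ _ _ (ne_of_gt hm0)).symm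
      _ ≤ Ns / m ^ 2 * ((m - 1) * bennett m) := h1
      _ = Ns * (m - 1) / m ^ 2 * bennett m := by ring
      _ = unifVar X * bennett m := by rw [hvar]
  -- cancel the logarithm
  have hmain : κ * Ns ≤ Cf γ * (c*b + 2 : ℝ) := by
    have h1 : (κ * Ns) * Real.log m ≤ (Cf γ * (c*b + 2 : ℝ)) * Real.log m := by
      calc (κ * Ns) * Real.log m = κ * Ns * Real.log m := by ring
        _ ≤ unifVar X * bennett m := hKlow
        _ ≤ Cf γ * ((c*b + 2 : ℝ) * Real.log m) := hKup
        _ = (Cf γ * (c*b + 2 : ℝ)) * Real.log m := by ring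
    exact le_of_mul_le_mul_right h1 hlogm_pos
  -- conclude
  have hcb1 : (1:ℝ) ≤ (c:ℝ) * (b:ℝ) := by
    calc (1:ℝ) = 1 * 1 := by norm_num
      _ ≤ (c:ℝ) * (b:ℝ) := mul_le_mul hcR hb1R (by norm_num) (by linarith)
  have hcb3 : ((c:ℝ)*b + 2 : ℝ) ≤ 3 * ((c:ℝ) * b) := by linarith
  have hmain2 : κ * Ns ≤ Cf γ * (3 * ((c:ℝ) * (b:ℝ))) := by
    calc κ * Ns ≤ Cf γ * (c*b + 2 : ℝ) := hmain
      _ ≤ Cf γ * (3 * ((c:ℝ) * (b:ℝ))) := mul_le_mul_of_nonneg_left hcb3 (le_of_lt hCfγ)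
  have hNsfac : Ns = (b:ℝ) ^ (c - 1) * (b:ℝ) := by
    rw [hNsdef, ← pow_succ]
    congr 1
    omega
  have hbpos : (0:ℝ) < (b:ℝ) := by linarith
  have hmain3 : κ * (b:ℝ) ^ (c - 1) ≤ Cf γ * (3 * (c:ℝ)) := by
    have h1 : (κ * (b:ℝ) ^ (c - 1)) * (b:ℝ) ≤ (Cf γ * (3 * (c:ℝ))) * (b:ℝ) := by
      calc (κ * (b:ℝ) ^ (c - 1)) * (b:ℝ) = κ * Ns := by rw [hNsfac]; ring
        _ ≤ Cf γ * (3 * ((c:ℝ) * (b:ℝ))) := hmain2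
        _ = (Cf γ * (3 * (c:ℝ))) * (b:ℝ) := by ring
    exact le_of_mul_le_mul_right h1 hbpos
  -- final comparison with γ^(c-2)
  have hD : (0:ℝ) < (2 * (c:ℝ)) ^ (c - 1) := by positivity
  have hrp1 : γ ^ ((c:ℝ) - 2) ≤ γ ^ ((c:ℝ) - 1) :=
    Real.rpow_le_rpow_of_exponent_le hγ1 (by linarith)
  have hrp2 : γ ^ ((c:ℝ) - 1) = γ ^ ((c - 1 : ℕ)) := by
    rw [← Real.rpow_natCast γ (c - 1)]
    congr 1
    rw [Nat.cast_sub hc]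
    norm_num
  have hrp3 : γ ^ ((c-1 : ℕ)) ≤ (2 * (c:ℝ) * (b:ℝ)) ^ (c - 1) :=
    pow_le_pow_left₀ (le_of_lt hγpos) hγ2cb _
  have hrp4 : (2 * (c:ℝ) * (b:ℝ)) ^ (c - 1) = (2 * (c:ℝ)) ^ (c-1) * (b:ℝ) ^ (c-1) :=
    mul_pow _ _ _
  calc κ / (3 * (c:ℝ) * (2 * (c:ℝ)) ^ (c - 1)) * γ ^ ((c:ℝ) - 2)
      ≤ κ / (3 * (c:ℝ) * (2 * (c:ℝ)) ^ (c - 1)) * ((2 * (c:ℝ)) ^ (c-1) * (b:ℝ) ^ (c-1)) := by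
        apply mul_le_mul_of_nonneg_left _ (by positivity)
        rw [← hrp4]
        calc γ ^ ((c:ℝ) - 2) ≤ γ ^ ((c:ℝ) - 1) := hrp1
          _ = γ ^ ((c-1 : ℕ)) := hrp2
          _ ≤ _ := hrp3
    _ = κ * (b:ℝ) ^ (c-1) / (3 * (c:ℝ)) :=
        aux4 _ _ _ _ (by positivity) (ne_of_gt hD)
    _ ≤ Cf γ := by
        rw [div_le_iff₀ (by positivity)]
        linarith [hmain3]
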